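/- For every odd integer d ≥ 3, the vectors of the set U_d^odd = (⋃_{k=0}^{(d−3)/2} C^{(d,d−2k)}) ∪ {S_d} in ℂ^(Fin d × Fin d × Fin d) are pairwise orthogonal and each is nonzero, and the set U_d^odd has exactly d³ − 4d + 4 elements. -/

import Mathlib

open scoped ComplexOrder

noncomputable section

/-- the standard basis vector e_a of ℂ^d (indexed by a natural number `a`;
it is the zero vector when `a ≥ d`). -/
def eV (d : ℕ) (a : ℕ) : Fin d → ℂ := fun k => if (k : ℕ) = a then 1 else 0

/-- ω_m = exp(2πi/m) -/
def wN (m : ℕ) : ℂ := Complex.exp (2 * Real.pi * Complex.I / m)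

/-- η_i^{(d−2k)} = Σ_{t=k}^{d−2−k} ω_{d−1−2k}^{i(t−k)} e_t -/
def etaG (d k i : ℕ) : Fin d → ℂ :=
  fun a => ∑ t ∈ Finset.Icc k (d - 2 - k), wN (d - 1 - 2 * k) ^ (i * (t - k)) * eV d t a

/-- ξ_j^{(d−2k)} = Σ_{t=k}^{d−2−k} ω_{d−1−2k}^{j(t−k)} e_{t+1} -/
def xiG (d k j : ℕ) : Fin d → ℂ :=
  fun a => ∑ t ∈ Finset.Icc k (d - 2 - k), wN (d - 1 - 2 * k) ^ (j * (t - k)) * eV d (t + 1) a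

/-- the product vector u ⊗ v ⊗ w -/
def tpv (d : ℕ) (u v w : Fin d → ℂ) : Fin d × Fin d × Fin d → ℂ :=
  fun p => u p.1 * v p.2.1 * w p.2.2

/-- the stopper state S_d = (Σ e_i) ⊗ (Σ e_j) ⊗ (Σ e_k) -/
def stopD (d : ℕ) : Fin d × Fin d × Fin d → ℂ :=
  tpv d (fun a => ∑ i ∈ Finset.range d, eV d i a)
    (fun a => ∑ i ∈ Finset.range d, eV d i a)
    (fun a => ∑ i ∈ Finset.range d, eV d i a)

/-- the set C^{(d,d−2k)}, the union of the six families A₁, A₂, A₃, B₁, B₂, B₃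
indexed by (i,j) ∈ ℤ_{d−1−2k} × ℤ_{d−1−2k} \ {(0,0)} -/
def Cset (d k : ℕ) : Set (Fin d × Fin d × Fin d → ℂ) :=
  {x | ∃ i j : ℕ, i < d - 1 - 2 * k ∧ j < d - 1 - 2 * k ∧ ¬(i = 0 ∧ j = 0) ∧
      (x = tpv d (xiG d k j) (eV d k) (etaG d k i) ∨
       x = tpv d (xiG d k j) (etaG d k i) (eV d (d - 1 - k)) ∨
       x = tpv d (eV d (d - 1 - k)) (xiG d k j) (etaG d k i) ∨
       x = tpv d (etaG d k i) (eV d (d - 1 - k)) (xiG d k j) ∨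
       x = tpv d (etaG d k i) (xiG d k j) (eV d k) ∨
       x = tpv d (eV d k) (etaG d k i) (xiG d k j))}

/-- with φ_i = e_{(d−2)/2} + (−1)^i e_{d/2}, the set
A^{(d,0)} = { φ_r ⊗ φ_s ⊗ φ_t : (r,s,t) ≠ (0,0,0) } (for even d) -/
def phiE (d i : ℕ) : Fin d → ℂ :=
  fun a => eV d ((d - 2) / 2) a + (-1 : ℂ) ^ i * eV d (d / 2) a

def A0set (d : ℕ) : Set (Fin d × Fin d × Fin d → ℂ) :=
  {x | ∃ r s t : ℕ, r < 2 ∧ s < 2 ∧ t < 2 ∧ ¬(r = 0 ∧ s = 0 ∧ t = 0) ∧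
      x = tpv d (phiE d r) (phiE d s) (phiE d t)}

/-- U_d^odd = (⋃_{k=0}^{(d−3)/2} C^{(d,d−2k)}) ∪ {S_d} -/
def Uodd (d : ℕ) : Set (Fin d × Fin d × Fin d → ℂ) :=
  {x | ∃ k ≤ (d - 3) / 2, x ∈ Cset d k} ∪ {stopD d}

/-- U_d^even = (⋃_{k=0}^{(d−4)/2} C^{(d,d−2k)}) ∪ A^{(d,0)} ∪ {S_d} -/
def Ueven (d : ℕ) : Set (Fin d × Fin d × Fin d → ℂ) :=
  {x | ∃ k ≤ (d - 4) / 2, x ∈ Cset d k} ∪ A0set d ∪ {stopD d}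

/-- the standard Hermitian inner product on ℂ^(Fin d × Fin d × Fin d) -/
def inpD (d : ℕ) (x y : Fin d × Fin d × Fin d → ℂ) : ℂ :=
  ∑ p, (starRingEnd ℂ) (x p) * y p

/-- Ẽ = I_d ⊗ E acting on ℂ^(Fin d × Fin d × Fin d) -/
def ampBCD (d : ℕ) (E : Matrix (Fin d × Fin d) (Fin d × Fin d) ℂ) :
    Matrix (Fin d × Fin d × Fin d) (Fin d × Fin d × Fin d) ℂ :=
  fun p q => (if p.1 = q.1 then (1 : ℂ) else 0) * E p.2 q.2

lemma wN_pow_self (m : ℕ) (hm : m ≠ 0) : wN m ^ m = 1 := by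
  rw [wN, ← Complex.exp_nat_mul]
  rw [show (m : ℂ) * (2 * Real.pi * Complex.I / m) = 2 * Real.pi * Complex.I by
    field_simp]
  simpa using Complex.exp_int_mul_two_pi_mul_I 1

lemma wN_prim (m : ℕ) (hm : m ≠ 0) : IsPrimitiveRoot (wN m) m :=
  Complex.isPrimitiveRoot_exp m hm

lemma not_dvd_aux (m i i' : ℕ) (hi : i < m) (hi' : i' < m) (hne : i ≠ i') :
    ¬ m ∣ ((m - 1) * i + i') := by
  intro h
  have hm : 1 ≤ m := by omega
  have h1 : (m:ℤ) ∣ ((m:ℤ)-1)*i + i' := by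
    have := Int.natCast_dvd_natCast.mpr h
    push_cast [Nat.cast_sub hm] at this
    convert this using 2
  have hz : (m:ℤ) ∣ ((i':ℤ) - i) := by
    have h2 := dvd_sub h1 (dvd_mul_right (m:ℤ) i)
    have h3 : ((m:ℤ)-1)*i + i' - m*i = (i':ℤ) - i := by ring
    rwa [h3] at h2
  rcases lt_or_gt_of_ne hne with hlt | hlt
  · have := Int.le_of_dvd (by omega) hz
    omega
  · have hz' : (m:ℤ) ∣ ((i:ℤ) - i') := by
      have := (dvd_neg (α := ℤ)).mpr hz
      rwa [neg_sub] at this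
    have := Int.le_of_dvd (by omega) hz'
    omega

lemma geom_zero (m e : ℕ) (hm : m ≠ 0) (he : ¬ m ∣ e) :
    ∑ s ∈ Finset.range m, wN m ^ (e * s) = 0 := by
  have hne : wN m ^ e ≠ 1 := fun h => he (((wN_prim m hm).pow_eq_one_iff_dvd e).mp h)
  have h2 : ∑ s ∈ Finset.range m, (wN m ^ e) ^ s = 0 := by
    rw [geom_sum_eq hne, ← pow_mul, mul_comm, pow_mul, wN_pow_self m hm, one_pow,
      sub_self, zero_div]
  simpa [← pow_mul] using h2

lemma conj_wN (m : ℕ) : (starRingEnd ℂ) (wN m) = (wN m)⁻¹ := by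
  rw [wN, ← Complex.exp_conj, ← Complex.exp_neg]
  congr 1
  simp only [map_div₀, map_mul, Complex.conj_I, Complex.conj_ofReal, map_ofNat,
    Complex.conj_natCast]
  ring

lemma conj_wN_pow (m e : ℕ) (hm : m ≠ 0) :
    (starRingEnd ℂ) (wN m ^ e) = wN m ^ ((m - 1) * e) := by
  have h2 : wN m * wN m ^ (m - 1) = 1 := by
    rw [← pow_succ', Nat.sub_add_cancel (Nat.one_le_iff_ne_zero.mpr hm)]
    exact wN_pow_self m hm
  rw [map_pow, conj_wN, inv_eq_of_mul_eq_one_right h2, ← pow_mul]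

def ipF (d : ℕ) (u v : Fin d → ℂ) : ℂ := ∑ a, (starRingEnd ℂ) (u a) * v a

lemma etaG_apply (d k i : ℕ) (a : Fin d) :
    etaG d k i a = if k ≤ (a:ℕ) ∧ (a:ℕ) ≤ d - 2 - k
      then wN (d - 1 - 2*k) ^ (i * ((a:ℕ) - k)) else 0 := by
  rw [etaG]
  simp only [eV, mul_ite, mul_one, mul_zero]
  rw [Finset.sum_ite_eq (Finset.Icc k (d-2-k)) ((a:ℕ)) (fun t => wN (d-1-2*k) ^ (i*(t-k)))]
  simp [Finset.mem_Icc]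

lemma xiG_apply (d k j : ℕ) (hk : k + 2 ≤ d) (a : Fin d) :
    xiG d k j a = if k + 1 ≤ (a:ℕ) ∧ (a:ℕ) ≤ d - 1 - k
      then wN (d - 1 - 2*k) ^ (j * ((a:ℕ) - (k+1))) else 0 := by
  rw [xiG]
  have himg : Finset.Icc (k+1) (d-1-k) = (Finset.Icc k (d-2-k)).image (· + 1) := by
    ext u; simp only [Finset.mem_image, Finset.mem_Icc]
    constructor
    · intro h; exact ⟨u - 1, by omega⟩
    · rintro ⟨t, ht, rfl⟩; omega
  have hinj : Set.InjOn (· + 1) (Finset.Icc k (d-2-k)) := fun x _ y _ h => by simpa using h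
  have := Finset.sum_image (f := fun u => wN (d-1-2*k) ^ (j * (u - (k+1))) *
      (if (a:ℕ) = u then (1:ℂ) else 0)) (g := (· + 1)) hinj
  rw [← himg] at this
  have h2 : ∀ t ∈ Finset.Icc k (d-2-k),
      wN (d-1-2*k) ^ (j * (t + 1 - (k+1))) * (if (a:ℕ) = t + 1 then (1:ℂ) else 0)
      = wN (d-1-2*k) ^ (j * (t - k)) * eV d (t+1) a := by
    intro t ht
    simp only [eV]
    rw [show t + 1 - (k+1) = t - k from by omega]
  rw [← Finset.sum_congr rfl h2, ← this]
  simp only [mul_ite, mul_one, mul_zero]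
  rw [Finset.sum_ite_eq (Finset.Icc (k+1) (d-1-k)) ((a:ℕ))
    (fun u => wN (d-1-2*k) ^ (j*(u-(k+1))))]
  simp [Finset.mem_Icc]

lemma ipF_eV_left (d c : ℕ) (hc : c < d) (v : Fin d → ℂ) :
    ipF d (eV d c) v = v ⟨c, hc⟩ := by
  rw [ipF, Finset.sum_eq_single (⟨c, hc⟩ : Fin d)]
  · simp [eV]
  · intro b _ hb
    have : (b:ℕ) ≠ c := fun h => hb (Fin.ext h)
    simp [eV, this]
  · simp

lemma ipF_eV_right (d c : ℕ) (hc : c < d) (v : Fin d → ℂ) :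
    ipF d v (eV d c) = (starRingEnd ℂ) (v ⟨c, hc⟩) := by
  rw [ipF, Finset.sum_eq_single (⟨c, hc⟩ : Fin d)]
  · simp [eV]
  · intro b _ hb
    have : (b:ℕ) ≠ c := fun h => hb (Fin.ext h)
    simp [eV, this]
  · simp

lemma tpv_inner (d : ℕ) (u v w u' v' w' : Fin d → ℂ) :
    inpD d (tpv d u v w) (tpv d u' v' w') = ipF d u u' * ipF d v v' * ipF d w w' := by
  have key : ∀ (A B C : Fin d → ℂ), (∑ a, A a) * (∑ b, B b) * (∑ c, C c)
      = ∑ a, ∑ b, ∑ c, A a * B b * C c := by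
    intro A B C
    rw [Finset.sum_mul_sum, Finset.sum_mul]
    refine Finset.sum_congr rfl fun a _ => ?_
    rw [Finset.sum_mul]
    exact Finset.sum_congr rfl fun b _ => Finset.mul_sum _ _ _
  simp only [inpD, tpv, ipF, map_mul, Fintype.sum_prod_type]
  rw [key]
  refine Finset.sum_congr rfl fun a _ => Finset.sum_congr rfl fun b _ =>
    Finset.sum_congr rfl fun c _ => ?_
  ring

/-- converting a Fin-sum over the eta support window into a range sum -/
lemma sum_window (d lo hi : ℕ) (hhi : hi < d) (f : ℕ → ℂ) :
    (∑ a : Fin d, if lo ≤ (a:ℕ) ∧ (a:ℕ) ≤ hi then f (a:ℕ) else 0)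
      = ∑ s ∈ Finset.range (hi + 1 - lo), f (lo + s) := by
  rw [Fin.sum_univ_eq_sum_range (fun t => if lo ≤ t ∧ t ≤ hi then f t else 0) d]
  rw [← Finset.sum_filter, show (Finset.range d).filter (fun t => lo ≤ t ∧ t ≤ hi)
    = Finset.Icc lo hi from by
      ext x; simp only [Finset.mem_filter, Finset.mem_range, Finset.mem_Icc]; omega]
  have himg : Finset.Icc lo hi = (Finset.range (hi + 1 - lo)).image (lo + ·) := by
    ext u; simp only [Finset.mem_image, Finset.mem_range, Finset.mem_Icc]
    constructor
    · intro h; exact ⟨u - lo, by omega⟩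
    · rintro ⟨s, hs, rfl⟩; omega
  rw [himg, Finset.sum_image (fun x _ y _ h => by simpa using h)]

section
variable (d n k : ℕ) (hd : d = 2*n+3) (hk : k ≤ n)
include hd hk

lemma eta_sum_range (e : ℕ) :
    (∑ a : Fin d, if k ≤ (a:ℕ) ∧ (a:ℕ) ≤ d-2-k
        then wN (d-1-2*k) ^ (e * ((a:ℕ) - k)) else 0)
      = ∑ s ∈ Finset.range (d-1-2*k), wN (d-1-2*k) ^ (e * s) := by
  rw [sum_window d k (d-2-k) (by omega) (fun t => wN (d-1-2*k) ^ (e * (t - k)))]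
  rw [show d-2-k+1-k = d-1-2*k from by omega]
  exact Finset.sum_congr rfl fun s _ => by rw [show k + s - k = s from by omega]

lemma xi_sum_range (e : ℕ) :
    (∑ a : Fin d, if k+1 ≤ (a:ℕ) ∧ (a:ℕ) ≤ d-1-k
        then wN (d-1-2*k) ^ (e * ((a:ℕ) - (k+1))) else 0)
      = ∑ s ∈ Finset.range (d-1-2*k), wN (d-1-2*k) ^ (e * s) := by
  rw [sum_window d (k+1) (d-1-k) (by omega) (fun t => wN (d-1-2*k) ^ (e * (t - (k+1))))]
  rw [show d-1-k+1-(k+1) = d-1-2*k from by omega]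
  exact Finset.sum_congr rfl fun s _ => by rw [show k + 1 + s - (k+1) = s from by omega]

lemma ipF_eta_eta (i i' : ℕ) (hi : i < d-1-2*k) (hi' : i' < d-1-2*k) (hne : i ≠ i') :
    ipF d (etaG d k i) (etaG d k i') = 0 := by
  set m := d-1-2*k with hm
  have hm0 : m ≠ 0 := by omega
  rw [ipF]
  have hpt : ∀ a : Fin d, (starRingEnd ℂ) (etaG d k i a) * etaG d k i' a
      = if k ≤ (a:ℕ) ∧ (a:ℕ) ≤ d-2-k
        then wN m ^ (((m-1)*i + i') * ((a:ℕ) - k)) else 0 := by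
    intro a
    rw [etaG_apply, etaG_apply]
    split_ifs with h
    · rw [← hm, conj_wN_pow m _ hm0, ← pow_add]
      congr 1; ring
    · simp
  rw [Finset.sum_congr rfl fun a _ => hpt a, eta_sum_range d n k hd hk]
  exact geom_zero m _ hm0 (not_dvd_aux m i i' hi hi' hne)

lemma ipF_xi_xi (j j' : ℕ) (hj : j < d-1-2*k) (hj' : j' < d-1-2*k) (hne : j ≠ j') :
    ipF d (xiG d k j) (xiG d k j') = 0 := by
  set m := d-1-2*k with hm
  have hm0 : m ≠ 0 := by omega
  rw [ipF]
  have hpt : ∀ a : Fin d, (starRingEnd ℂ) (xiG d k j a) * xiG d k j' a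
      = if k+1 ≤ (a:ℕ) ∧ (a:ℕ) ≤ d-1-k
        then wN m ^ (((m-1)*j + j') * ((a:ℕ) - (k+1))) else 0 := by
    intro a
    rw [xiG_apply d k j (by omega), xiG_apply d k j' (by omega)]
    split_ifs with h
    · rw [← hm, conj_wN_pow m _ hm0, ← pow_add]
      congr 1; ring
    · simp
  rw [Finset.sum_congr rfl fun a _ => hpt a, xi_sum_range d n k hd hk]
  exact geom_zero m _ hm0 (not_dvd_aux m j j' hj hj' hne)

lemma ipF_eta_one (i : ℕ) (hi : i < d-1-2*k) (hne : i ≠ 0) :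
    ipF d (etaG d k i) (fun _ => 1) = 0 := by
  set m := d-1-2*k with hm
  have hm0 : m ≠ 0 := by omega
  rw [ipF]
  have hpt : ∀ a : Fin d, (starRingEnd ℂ) (etaG d k i a) * 1
      = if k ≤ (a:ℕ) ∧ (a:ℕ) ≤ d-2-k then wN m ^ (((m-1)*i) * ((a:ℕ) - k)) else 0 := by
    intro a
    rw [etaG_apply, mul_one]
    split_ifs with h
    · rw [← hm, conj_wN_pow m _ hm0]
      congr 1; ring
    · simp
  rw [Finset.sum_congr rfl fun a _ => hpt a, eta_sum_range d n k hd hk]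
  have := not_dvd_aux m i 0 hi (by omega) hne
  simpa using geom_zero m ((m-1)*i) hm0 (by simpa using this)

lemma ipF_one_eta (i : ℕ) (hi : i < d-1-2*k) (hne : i ≠ 0) :
    ipF d (fun _ => 1) (etaG d k i) = 0 := by
  set m := d-1-2*k with hm
  have hm0 : m ≠ 0 := by omega
  rw [ipF]
  have hpt : ∀ a : Fin d, (starRingEnd ℂ) 1 * etaG d k i a
      = if k ≤ (a:ℕ) ∧ (a:ℕ) ≤ d-2-k then wN m ^ (i * ((a:ℕ) - k)) else 0 := by
    intro a
    rw [etaG_apply, map_one, one_mul, ← hm]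
  rw [Finset.sum_congr rfl fun a _ => hpt a, eta_sum_range d n k hd hk]
  have hnd : ¬ m ∣ i := fun h => hne (Nat.eq_zero_of_dvd_of_lt h hi)
  exact geom_zero m i hm0 hnd

lemma ipF_xi_one (j : ℕ) (hj : j < d-1-2*k) (hne : j ≠ 0) :
    ipF d (xiG d k j) (fun _ => 1) = 0 := by
  set m := d-1-2*k with hm
  have hm0 : m ≠ 0 := by omega
  rw [ipF]
  have hpt : ∀ a : Fin d, (starRingEnd ℂ) (xiG d k j a) * 1
      = if k+1 ≤ (a:ℕ) ∧ (a:ℕ) ≤ d-1-k then wN m ^ (((m-1)*j) * ((a:ℕ) - (k+1))) else 0 := by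
    intro a
    rw [xiG_apply d k j (by omega), mul_one]
    split_ifs with h
    · rw [← hm, conj_wN_pow m _ hm0]
      congr 1; ring
    · simp
  rw [Finset.sum_congr rfl fun a _ => hpt a, xi_sum_range d n k hd hk]
  have := not_dvd_aux m j 0 hj (by omega) hne
  exact geom_zero m ((m-1)*j) hm0 (by simpa using this)

lemma ipF_one_xi (j : ℕ) (hj : j < d-1-2*k) (hne : j ≠ 0) :
    ipF d (fun _ => 1) (xiG d k j) = 0 := by
  set m := d-1-2*k with hm
  have hm0 : m ≠ 0 := by omega
  rw [ipF]
  have hpt : ∀ a : Fin d, (starRingEnd ℂ) 1 * xiG d k j a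
      = if k+1 ≤ (a:ℕ) ∧ (a:ℕ) ≤ d-1-k then wN m ^ (j * ((a:ℕ) - (k+1))) else 0 := by
    intro a
    rw [xiG_apply d k j (by omega), map_one, one_mul, ← hm]
  rw [Finset.sum_congr rfl fun a _ => hpt a, xi_sum_range d n k hd hk]
  have hnd : ¬ m ∣ j := fun h => hne (Nat.eq_zero_of_dvd_of_lt h hj)
  exact geom_zero m j hm0 hnd

end

/-- the six product-vector families -/
def famV (d k F i j : ℕ) : Fin d × Fin d × Fin d → ℂ :=
  match F with
  | 0 => tpv d (xiG d k j) (eV d k) (etaG d k i)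
  | 1 => tpv d (xiG d k j) (etaG d k i) (eV d (d - 1 - k))
  | 2 => tpv d (eV d (d - 1 - k)) (xiG d k j) (etaG d k i)
  | 3 => tpv d (etaG d k i) (eV d (d - 1 - k)) (xiG d k j)
  | 4 => tpv d (etaG d k i) (xiG d k j) (eV d k)
  | _ => tpv d (eV d k) (etaG d k i) (xiG d k j)

lemma mem_Cset_iff (d k : ℕ) (x : Fin d × Fin d × Fin d → ℂ) :
    x ∈ Cset d k ↔ ∃ F < 6, ∃ i j : ℕ, i < d - 1 - 2*k ∧ j < d - 1 - 2*k ∧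
      ¬(i = 0 ∧ j = 0) ∧ x = famV d k F i j := by
  constructor
  · rintro ⟨i, j, hi, hj, hij, h | h | h | h | h | h⟩
    · exact ⟨0, by norm_num, i, j, hi, hj, hij, h⟩
    · exact ⟨1, by norm_num, i, j, hi, hj, hij, h⟩
    · exact ⟨2, by norm_num, i, j, hi, hj, hij, h⟩
    · exact ⟨3, by norm_num, i, j, hi, hj, hij, h⟩
    · exact ⟨4, by norm_num, i, j, hi, hj, hij, h⟩
    · exact ⟨5, by norm_num, i, j, hi, hj, hij, h⟩
  · rintro ⟨F, hF, i, j, hi, hj, hij, rfl⟩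
    refine ⟨i, j, hi, hj, hij, ?_⟩
    interval_cases F <;> simp [famV]

lemma eta_out (d k i c : ℕ) (hcd : c < d) (hc : c < k ∨ d - 2 - k < c) :
    etaG d k i ⟨c, hcd⟩ = 0 := by
  rw [etaG_apply]
  have : ¬ (k ≤ c ∧ c ≤ d - 2 - k) := by omega
  simp [this]

lemma xi_out (d k j c : ℕ) (hk2 : k + 2 ≤ d) (hcd : c < d) (hc : c < k + 1 ∨ d - 1 - k < c) :
    xiG d k j ⟨c, hcd⟩ = 0 := by
  rw [xiG_apply d k j hk2]
  have : ¬ (k + 1 ≤ c ∧ c ≤ d - 1 - k) := by omega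
  exact if_neg this

lemma eV_out (d c c' : ℕ) (hcd : c < d) (hc : c ≠ c') : eV d c' ⟨c, hcd⟩ = 0 := by
  simp [eV, hc]

section
variable (d n : ℕ) (hd : d = 2*n+3)
include hd

lemma orth_cross (k k' F F' i j i' j' : ℕ) (hk : k ≤ n) (hk' : k' ≤ n) (hkk : k < k')
    (hF : F < 6) (hF' : F' < 6) :
    inpD d (famV d k F i j) (famV d k' F' i' j') = 0 := by
  have hkd : k < d := by omega
  have hDd : d - 1 - k < d := by omega
  have hKη : ipF d (eV d k) (etaG d k' i') = 0 := by
    rw [ipF_eV_left d k hkd]; exact eta_out d k' i' k hkd (by omega)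
  have hKξ : ipF d (eV d k) (xiG d k' j') = 0 := by
    rw [ipF_eV_left d k hkd]; exact xi_out d k' j' k (by omega) hkd (by omega)
  have hKe0 : ipF d (eV d k) (eV d k') = 0 := by
    rw [ipF_eV_left d k hkd]; exact eV_out d k k' hkd (by omega)
  have hKe1 : ipF d (eV d k) (eV d (d - 1 - k')) = 0 := by
    rw [ipF_eV_left d k hkd]; exact eV_out d k (d-1-k') hkd (by omega)
  have hDη : ipF d (eV d (d - 1 - k)) (etaG d k' i') = 0 := by
    rw [ipF_eV_left d (d-1-k) hDd]; exact eta_out d k' i' (d-1-k) hDd (by omega)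
  have hDξ : ipF d (eV d (d - 1 - k)) (xiG d k' j') = 0 := by
    rw [ipF_eV_left d (d-1-k) hDd]; exact xi_out d k' j' (d-1-k) (by omega) hDd (by omega)
  have hDe0 : ipF d (eV d (d - 1 - k)) (eV d k') = 0 := by
    rw [ipF_eV_left d (d-1-k) hDd]; exact eV_out d (d-1-k) k' hDd (by omega)
  have hDe1 : ipF d (eV d (d - 1 - k)) (eV d (d - 1 - k')) = 0 := by
    rw [ipF_eV_left d (d-1-k) hDd]; exact eV_out d (d-1-k) (d-1-k') hDd (by omega)
  interval_cases F <;> interval_cases F' <;>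
    simp only [famV, tpv_inner, hKη, hKξ, hKe0, hKe1, hDη, hDξ, hDe0, hDe1,
      zero_mul, mul_zero]
end

section
variable (d n : ℕ) (hd : d = 2*n+3)
include hd

lemma orth_cross' (k k' F F' i j i' j' : ℕ) (hk : k ≤ n) (hk' : k' ≤ n) (hkk : k' < k)
    (hF : F < 6) (hF' : F' < 6) :
    inpD d (famV d k F i j) (famV d k' F' i' j') = 0 := by
  have hkd : k' < d := by omega
  have hDd : d - 1 - k' < d := by omega
  have hKη : ipF d (etaG d k i) (eV d k') = 0 := by
    rw [ipF_eV_right d k' hkd, eta_out d k i k' hkd (by omega), map_zero]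
  have hKξ : ipF d (xiG d k j) (eV d k') = 0 := by
    rw [ipF_eV_right d k' hkd, xi_out d k j k' (by omega) hkd (by omega), map_zero]
  have hKe0 : ipF d (eV d k) (eV d k') = 0 := by
    rw [ipF_eV_right d k' hkd, eV_out d k' k hkd (by omega), map_zero]
  have hKe1 : ipF d (eV d (d - 1 - k)) (eV d k') = 0 := by
    rw [ipF_eV_right d k' hkd, eV_out d k' (d-1-k) hkd (by omega), map_zero]
  have hDη : ipF d (etaG d k i) (eV d (d - 1 - k')) = 0 := by
    rw [ipF_eV_right d (d-1-k') hDd, eta_out d k i (d-1-k') hDd (by omega), map_zero]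
  have hDξ : ipF d (xiG d k j) (eV d (d - 1 - k')) = 0 := by
    rw [ipF_eV_right d (d-1-k') hDd, xi_out d k j (d-1-k') (by omega) hDd (by omega), map_zero]
  have hDe0 : ipF d (eV d k) (eV d (d - 1 - k')) = 0 := by
    rw [ipF_eV_right d (d-1-k') hDd, eV_out d (d-1-k') k hDd (by omega), map_zero]
  have hDe1 : ipF d (eV d (d - 1 - k)) (eV d (d - 1 - k')) = 0 := by
    rw [ipF_eV_right d (d-1-k') hDd, eV_out d (d-1-k') (d-1-k) hDd (by omega), map_zero]
  interval_cases F <;> interval_cases F' <;>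
    simp only [famV, tpv_inner, hKη, hKξ, hKe0, hKe1, hDη, hDξ, hDe0, hDe1,
      zero_mul, mul_zero]

lemma orth_sameK (k F F' i j i' j' : ℕ) (hk : k ≤ n) (hFF' : F ≠ F')
    (hF : F < 6) (hF' : F' < 6) :
    inpD d (famV d k F i j) (famV d k F' i' j') = 0 := by
  have hkd : k < d := by omega
  have hDd : d - 1 - k < d := by omega
  have hxe : ipF d (xiG d k j) (eV d k) = 0 := by
    rw [ipF_eV_right d k hkd, xi_out d k j k (by omega) hkd (by omega), map_zero]
  have hex : ipF d (eV d k) (xiG d k j') = 0 := by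
    rw [ipF_eV_left d k hkd]; exact xi_out d k j' k (by omega) hkd (by omega)
  have hηe : ipF d (etaG d k i) (eV d (d - 1 - k)) = 0 := by
    rw [ipF_eV_right d (d-1-k) hDd, eta_out d k i (d-1-k) hDd (by omega), map_zero]
  have heη : ipF d (eV d (d - 1 - k)) (etaG d k i') = 0 := by
    rw [ipF_eV_left d (d-1-k) hDd]; exact eta_out d k i' (d-1-k) hDd (by omega)
  have hee : ipF d (eV d k) (eV d (d - 1 - k)) = 0 := by
    rw [ipF_eV_left d k hkd]; exact eV_out d k (d-1-k) hkd (by omega)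
  have hee' : ipF d (eV d (d - 1 - k)) (eV d k) = 0 := by
    rw [ipF_eV_left d (d-1-k) hDd]; exact eV_out d (d-1-k) k hDd (by omega)
  interval_cases F <;> interval_cases F' <;>
    first
      | exact absurd rfl hFF'
      | simp only [famV, tpv_inner, hxe, hex, hηe, heη, hee, hee', zero_mul, mul_zero]

lemma orth_sameF (k F i j i' j' : ℕ) (hk : k ≤ n) (hF : F < 6)
    (hi : i < d-1-2*k) (hi' : i' < d-1-2*k) (hj : j < d-1-2*k) (hj' : j' < d-1-2*k)
    (hne : ¬(i = i' ∧ j = j')) :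
    inpD d (famV d k F i j) (famV d k F i' j') = 0 := by
  rcases eq_or_ne i i' with rfl | hii
  · have hjj : j ≠ j' := fun h => hne ⟨rfl, h⟩
    have hξ : ipF d (xiG d k j) (xiG d k j') = 0 := ipF_xi_xi d n k hd hk j j' hj hj' hjj
    interval_cases F <;>
      simp only [famV, tpv_inner, hξ, zero_mul, mul_zero]
  · have hη : ipF d (etaG d k i) (etaG d k i') = 0 := ipF_eta_eta d n k hd hk i i' hi hi' hii
    interval_cases F <;>
      simp only [famV, tpv_inner, hη, zero_mul, mul_zero]
end
end

lemma stopD_eq (d : ℕ) :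
    stopD d = tpv d (fun _ => 1) (fun _ => 1) (fun _ => 1) := by
  have h : (fun a : Fin d => ∑ i ∈ Finset.range d, eV d i a) = fun _ => (1:ℂ) := by
    funext a
    simp only [eV]
    rw [Finset.sum_ite_eq (Finset.range d) ((a:ℕ)) (fun _ => (1:ℂ))]
    simp [a.isLt]
  rw [stopD, h]

section
variable (d n : ℕ) (hd : d = 2*n+3)
include hd

lemma orth_stop (k F i j : ℕ) (hk : k ≤ n) (hF : F < 6)
    (hi : i < d-1-2*k) (hj : j < d-1-2*k) (hij : ¬(i = 0 ∧ j = 0)) :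
    inpD d (famV d k F i j) (stopD d) = 0 ∧ inpD d (stopD d) (famV d k F i j) = 0 := by
  rw [stopD_eq]
  rcases eq_or_ne i 0 with rfl | hi0
  · have hj0 : j ≠ 0 := fun h => hij ⟨rfl, h⟩
    have h1 := ipF_xi_one d n k hd hk j hj hj0
    have h2 := ipF_one_xi d n k hd hk j hj hj0
    constructor <;> (interval_cases F <;>
      simp only [famV, tpv_inner, h1, h2, zero_mul, mul_zero])
  · have h1 := ipF_eta_one d n k hd hk i hi hi0
    have h2 := ipF_one_eta d n k hd hk i hi hi0
    constructor <;> (interval_cases F <;>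
      simp only [famV, tpv_inner, h1, h2, zero_mul, mul_zero])

lemma eta_at_k (k i : ℕ) (hk : k ≤ n) : etaG d k i ⟨k, by omega⟩ = 1 := by
  rw [etaG_apply]
  have h : k ≤ k ∧ k ≤ d - 2 - k := by omega
  simp [h]

lemma xi_at_k (k j : ℕ) (hk : k ≤ n) : xiG d k j ⟨k+1, by omega⟩ = 1 := by
  rw [xiG_apply d k j (by omega)]
  have h : k + 1 ≤ k + 1 ∧ k + 1 ≤ d - 1 - k := by omega
  simp [h]

lemma famV_ne_zero (k F i j : ℕ) (hk : k ≤ n) (hF : F < 6) :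
    famV d k F i j ≠ 0 := by
  have hkd : k < d := by omega
  have hk1 : k + 1 < d := by omega
  have hDd : d - 1 - k < d := by omega
  have he0 : eV d k ⟨k, hkd⟩ = 1 := by simp [eV]
  have he1 : eV d (d-1-k) ⟨d-1-k, hDd⟩ = 1 := by simp [eV]
  have hη := eta_at_k d n hd k i hk
  have hξ := xi_at_k d n hd k j hk
  intro h
  interval_cases F
  · have := congrFun h (⟨k+1, hk1⟩, ⟨k, hkd⟩, ⟨k, hkd⟩)
    simp only [famV] at this
    simp only [tpv, hη, hξ, he0, Pi.zero_apply, mul_one, one_mul] at this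
    exact one_ne_zero this
  · have := congrFun h (⟨k+1, hk1⟩, ⟨k, hkd⟩, ⟨d-1-k, hDd⟩)
    simp only [famV] at this
    simp only [tpv, hη, hξ, he1, Pi.zero_apply, mul_one, one_mul] at this
    exact one_ne_zero this
  · have := congrFun h (⟨d-1-k, hDd⟩, ⟨k+1, hk1⟩, ⟨k, hkd⟩)
    simp only [famV] at this
    simp only [tpv, hη, hξ, he1, Pi.zero_apply, mul_one, one_mul] at this
    exact one_ne_zero this
  · have := congrFun h (⟨k, hkd⟩, ⟨d-1-k, hDd⟩, ⟨k+1, hk1⟩)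
    simp only [famV] at this
    simp only [tpv, hη, hξ, he1, Pi.zero_apply, mul_one, one_mul] at this
    exact one_ne_zero this
  · have := congrFun h (⟨k, hkd⟩, ⟨k+1, hk1⟩, ⟨k, hkd⟩)
    simp only [famV] at this
    simp only [tpv, hη, hξ, he0, Pi.zero_apply, mul_one, one_mul] at this
    exact one_ne_zero this
  · have := congrFun h (⟨k, hkd⟩, ⟨k, hkd⟩, ⟨k+1, hk1⟩)
    simp only [famV] at this
    simp only [tpv, hη, hξ, he0, Pi.zero_apply, mul_one, one_mul] at this
    exact one_ne_zero this
end

lemma stopD_ne_zero (d : ℕ) (hd : 0 < d) : stopD d ≠ 0 := by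
  rw [stopD_eq]
  intro h
  have := congrFun h (⟨0, hd⟩, ⟨0, hd⟩, ⟨0, hd⟩)
  simp [tpv] at this

lemma inpD_self_eq_zero (d : ℕ) (x : Fin d × Fin d × Fin d → ℂ)
    (h : inpD d x x = 0) : x = 0 := by
  rw [inpD] at h
  have h2 : ∀ p, (starRingEnd ℂ) (x p) * x p = ((Complex.normSq (x p) : ℝ) : ℂ) := by
    intro p
    rw [Complex.normSq_eq_conj_mul_self]
  rw [Finset.sum_congr rfl fun p _ => h2 p] at h
  rw [← Complex.ofReal_sum] at h
  have h3 : ∑ p, Complex.normSq (x p) = 0 := by exact_mod_cast h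
  have h4 := (Finset.sum_eq_zero_iff_of_nonneg
    (fun p _ => Complex.normSq_nonneg (x p))).mp h3
  funext p
  exact Complex.normSq_eq_zero.mp (h4 p (Finset.mem_univ p))

def PF (d : ℕ) : Finset (ℕ×ℕ×ℕ×ℕ) :=
  (Finset.range ((d-3)/2+1)).biUnion fun k =>
    (Finset.range 6).biUnion fun F =>
      (((Finset.range (d-1-2*k)) ×ˢ (Finset.range (d-1-2*k))).erase (0,0)).image
        fun ij => (k, F, ij.1, ij.2)

lemma mem_PF (d k F i j : ℕ) : (k,F,i,j) ∈ PF d ↔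
    k ≤ (d-3)/2 ∧ F < 6 ∧ i < d-1-2*k ∧ j < d-1-2*k ∧ ¬(i = 0 ∧ j = 0) := by
  simp only [PF, Finset.mem_biUnion, Finset.mem_range, Finset.mem_image,
    Finset.mem_erase, Finset.mem_product]
  constructor
  · rintro ⟨k', hk', F', hF', ⟨a, b⟩, ⟨hne, ha, hb⟩, heq⟩
    simp only [Prod.mk.injEq] at heq
    obtain ⟨rfl, rfl, rfl, rfl⟩ := heq
    refine ⟨by omega, hF', ha, hb, ?_⟩
    rintro ⟨rfl, rfl⟩; exact hne rfl
  · rintro ⟨hk, hF, hi, hj, hij⟩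
    exact ⟨k, by omega, F, hF, ⟨i, j⟩, ⟨by simpa using hij, hi, hj⟩, rfl⟩

lemma card_PF (d n : ℕ) (hd : d = 2*n+3) :
    (PF d).card = ∑ k ∈ Finset.range (n+1), 6*((d-1-2*k)*(d-1-2*k)-1) := by
  have hn : (d-3)/2 = n := by omega
  rw [PF, hn, Finset.card_biUnion]
  · refine Finset.sum_congr rfl fun k hk => ?_
    rw [Finset.card_biUnion]
    · have hcard : ∀ F ∈ Finset.range 6,
          ((((Finset.range (d-1-2*k)) ×ˢ (Finset.range (d-1-2*k))).erase (0,0)).image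
            fun ij => (k, F, ij.1, ij.2)).card = (d-1-2*k)*(d-1-2*k)-1 := by
        intro F _
        rw [Finset.card_image_of_injective _ (fun a b hab => by
          simp only [Prod.mk.injEq] at hab
          exact Prod.ext hab.2.2.1 hab.2.2.2)]
        rw [Finset.card_erase_of_mem (by
          simp only [Finset.mem_product, Finset.mem_range]
          have : 0 < d-1-2*k := by simp only [Finset.mem_range] at hk; omega
          exact ⟨this, this⟩)]
        simp [Finset.card_product]
      rw [Finset.sum_congr rfl hcard]
      simp [Finset.sum_const, mul_comm]
    · intro F1 h1 F2 h2 hne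
      simp only [Finset.disjoint_left, Finset.mem_image]
      rintro x ⟨a, _, rfl⟩ ⟨b, _, hb⟩
      simp only [Prod.mk.injEq] at hb
      exact hne hb.2.1.symm
  · intro k1 h1 k2 h2 hne
    simp only [Finset.disjoint_left, Finset.mem_biUnion, Finset.mem_image]
    rintro x ⟨F1, _, a, _, rfl⟩ ⟨F2, _, b, _, hb⟩
    simp only [Prod.mk.injEq] at hb
    exact hne hb.1.symm

lemma sum_aux (n : ℕ) :
    ∑ k ∈ Finset.range (n+1), 6*((2*k+2)*(2*k+2)-1) = 8*(n*(n*n))+36*(n*n)+46*n+18 := by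
  have hterm : ∀ k, 6*((2*k+2)*(2*k+2)-1) = 24*(k*k)+48*k+18 := by
    intro k
    rw [show (2*k+2)*(2*k+2) = (4*(k*k)+8*k+3)+1 from by ring]
    generalize k*k = q
    omega
  rw [Finset.sum_congr rfl fun k _ => hterm k]
  induction n with
  | zero => simp
  | succ m ih =>
    rw [Finset.sum_range_succ, ih]
    ring

lemma count_sum (d n : ℕ) (hd : d = 2*n+3) :
    ∑ k ∈ Finset.range (n+1), 6*((d-1-2*k)*(d-1-2*k)-1) = 8*(n*(n*n))+36*(n*n)+46*n+18 := by
  rw [← sum_aux n, ← Finset.sum_range_reflect (fun k => 6*((2*k+2)*(2*k+2)-1)) (n+1)]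
  refine Finset.sum_congr rfl fun k hk => ?_
  simp only [Finset.mem_range] at hk
  rw [show 2*(n+1-1-k)+2 = d-1-2*k from by omega]

lemma final_count (d n : ℕ) (hd : d = 2*n+3) :
    (8*(n*(n*n))+36*(n*n)+46*n+18) + 1 = d^3 - 4*d + 4 := by
  have h1 : d^3 = 8*(n*(n*n))+36*(n*n)+54*n+27 := by subst hd; ring
  have key : ∀ a b : ℕ, (8*a+36*b+46*n+18) + 1 = (8*a+36*b+54*n+27) - 4*(2*n+3) + 4 := by
    intro a b; omega
  rw [h1, hd, ← key (n*(n*n)) (n*n)]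

/-- For every odd d ≥ 3, the vectors of U_d^odd are nonzero, pairwise orthogonal,
and U_d^odd has exactly d³ − 4d + 4 elements. -/
theorem Uodd_pairwise_orthogonal_nonzero (d : ℕ) (hd : 3 ≤ d) (hodd : Odd d) :
    (∀ x ∈ Uodd d, x ≠ 0) ∧
    (∀ x ∈ Uodd d, ∀ y ∈ Uodd d, x ≠ y → inpD d x y = 0) ∧
    (Uodd d).ncard = d ^ 3 - 4 * d + 4 := by
  obtain ⟨n, hdn⟩ : ∃ n, d = 2*n+3 := by
    obtain ⟨t, ht⟩ := hodd; exact ⟨t-1, by omega⟩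
  have hn : (d-3)/2 = n := by omega
  set g : ℕ×ℕ×ℕ×ℕ → (Fin d × Fin d × Fin d → ℂ) :=
    fun p => famV d p.1 p.2.1 p.2.2.1 p.2.2.2 with hg
  have hmem : ∀ x, x ∈ Uodd d ↔ (∃ p ∈ PF d, x = g p) ∨ x = stopD d := by
    intro x
    simp only [Uodd, Set.mem_union, Set.mem_setOf_eq, Set.mem_singleton_iff, mem_Cset_iff]
    constructor
    · rintro (⟨k, hk, F, hF, i, j, hi, hj, hij, rfl⟩ | h)
      · exact Or.inl ⟨(k,F,i,j), (mem_PF d k F i j).mpr ⟨hk, hF, hi, hj, hij⟩, rfl⟩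
      · exact Or.inr h
    · rintro (⟨⟨k,F,i,j⟩, hp, rfl⟩ | h)
      · obtain ⟨hk, hF, hi, hj, hij⟩ := (mem_PF d k F i j).mp hp
        exact Or.inl ⟨k, hk, F, hF, i, j, hi, hj, hij, rfl⟩
      · exact Or.inr h
  have horthP : ∀ p ∈ PF d, ∀ q ∈ PF d, p ≠ q → inpD d (g p) (g q) = 0 := by
    rintro ⟨k,F,i,j⟩ hp ⟨k',F',i',j'⟩ hq hne
    obtain ⟨hk, hF, hi, hj, hij⟩ := (mem_PF d k F i j).mp hp
    obtain ⟨hk', hF', hi', hj', hij'⟩ := (mem_PF d k' F' i' j').mp hq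
    rcases lt_trichotomy k k' with hkk | rfl | hkk
    · exact orth_cross d n hdn k k' F F' i j i' j' (by omega) (by omega) hkk hF hF'
    · rcases eq_or_ne F F' with rfl | hFF
      · refine orth_sameF d n hdn k F i j i' j' (by omega) hF hi hi' hj hj' ?_
        rintro ⟨rfl, rfl⟩; exact hne rfl
      · exact orth_sameK d n hdn k F F' i j i' j' (by omega) hFF hF hF'
    · exact orth_cross' d n hdn k k' F F' i j i' j' (by omega) (by omega) hkk hF hF'
  have hstop : ∀ p ∈ PF d, inpD d (g p) (stopD d) = 0 ∧ inpD d (stopD d) (g p) = 0 := by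
    rintro ⟨k,F,i,j⟩ hp
    obtain ⟨hk, hF, hi, hj, hij⟩ := (mem_PF d k F i j).mp hp
    exact orth_stop d n hdn k F i j (by omega) hF hi hj hij
  have hnz : ∀ p ∈ PF d, g p ≠ 0 := by
    rintro ⟨k,F,i,j⟩ hp
    obtain ⟨hk, hF, hi, hj, hij⟩ := (mem_PF d k F i j).mp hp
    exact famV_ne_zero d n hdn k F i j (by omega) hF
  have hs0 : stopD d ≠ 0 := stopD_ne_zero d (by omega)
  have hgs : ∀ p ∈ PF d, g p ≠ stopD d := by
    intro p hp heq
    have h0 := (hstop p hp).1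
    rw [heq] at h0
    exact hs0 (inpD_self_eq_zero d _ h0)
  refine ⟨?_, ?_, ?_⟩
  · intro x hx
    rcases (hmem x).mp hx with ⟨p, hp, rfl⟩ | rfl
    · exact hnz p hp
    · exact hs0
  · intro x hx y hy hxy
    rcases (hmem x).mp hx with ⟨p, hp, rfl⟩ | rfl <;>
      rcases (hmem y).mp hy with ⟨q, hq, rfl⟩ | rfl
    · exact horthP p hp q hq (fun h => hxy (by rw [h]))
    · exact (hstop p hp).1
    · exact (hstop q hq).2
    · exact absurd rfl hxy
  · have hU : Uodd d = insert (stopD d) (g '' ↑(PF d)) := by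
      ext x
      rw [hmem x, Set.mem_insert_iff]
      constructor
      · rintro (⟨p, hp, rfl⟩ | h)
        · exact Or.inr ⟨p, hp, rfl⟩
        · exact Or.inl h
      · rintro (h | ⟨p, hp, rfl⟩)
        · exact Or.inr h
        · exact Or.inl ⟨p, hp, rfl⟩
    have hnotmem : stopD d ∉ g '' ↑(PF d) := by
      rintro ⟨p, hp, heq⟩
      exact hgs p hp heq
    have hinj : Set.InjOn g ↑(PF d) := by
      intro p hp q hq heq
      by_contra hne
      have h0 := horthP p hp q hq hne
      rw [heq] at h0
      exact hnz q hq (inpD_self_eq_zero d _ h0)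
    rw [hU, Set.ncard_insert_of_notMem hnotmem (((PF d).finite_toSet).image g),
      Set.ncard_image_of_injOn hinj, Set.ncard_coe_finset,
      card_PF d n hdn, count_sum d n hdn]
    exact final_count d n hdn
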